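/- Let H be a two-dimensional complex inner product space and let e, f : Fin 2 → H be orthonormal bases with associated classical structures δ_e and δ_f. Then every subspace K of H copyable along both δ_e and δ_f satisfies K = ⊥ or K = ⊤ if and only if ℂ ∙ (e i) ≠ ℂ ∙ (f j) for all i, j : Fin 2, i.e. the two bases share no common ray. (In particular, classical structures induced by different rays in ℂ² always have trivially intersecting collections of copyables.) -/

import Mathlib

open scoped TensorProduct InnerProductSpace

/-- The orthogonal projection of `H` onto the subspace `K`, regarded as an endomorphism
`P_K : H →ₗ[ℂ] H`. -/
noncomputable def projL {H : Type*} [NormedAddCommGroup H] [InnerProductSpace ℂ H]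
    [FiniteDimensional ℂ H] (K : Submodule ℂ H) : H →ₗ[ℂ] H :=
  K.subtype ∘ₗ K.orthogonalProjection.toLinearMap

/-- The classical structure `δ_e : H →ₗ[ℂ] H ⊗[ℂ] H` associated with an orthonormal basis
`e`, determined by `δ_e x = ∑ i, ⟪e i, x⟫_ℂ • (e i ⊗ₜ e i)`. -/
noncomputable def delta {ι H : Type*} [Fintype ι] [NormedAddCommGroup H]
    [InnerProductSpace ℂ H] (e : ι → H) : H →ₗ[ℂ] H ⊗[ℂ] H :=
  ∑ i, (innerSL ℂ (e i)).toLinearMap.smulRight (e i ⊗ₜ[ℂ] e i)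

/-- A subspace `K` of `H` is copyable along `δ_e` if `δ_e ∘ₗ P_K = (P_K ⊗ P_K) ∘ₗ δ_e`. -/
def Copyable {ι H : Type*} [Fintype ι] [NormedAddCommGroup H] [InnerProductSpace ℂ H]
    [FiniteDimensional ℂ H] (e : ι → H) (K : Submodule ℂ H) : Prop :=
  delta e ∘ₗ projL K = TensorProduct.map (projL K) (projL K) ∘ₗ delta e

set_option linter.unusedSectionVars false

section Aux

variable {H : Type*} [NormedAddCommGroup H] [InnerProductSpace ℂ H] [FiniteDimensional ℂ H]

lemma delta_apply {ι : Type*} [Fintype ι] (e : ι → H) (x : H) :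
    delta e x = ∑ i, ⟪e i, x⟫_ℂ • (e i ⊗ₜ[ℂ] e i) := by
  simp [delta, LinearMap.sum_apply]

lemma projL_apply_unit {v : H} (hv : ‖v‖ = 1) (w : H) :
    projL (ℂ ∙ v) w = ⟪v, w⟫_ℂ • v := by
  simp [projL, Submodule.starProjection_unit_singleton ℂ hv w]

lemma delta_basis_apply {ι : Type*} [Fintype ι] [DecidableEq ι]
    (e : OrthonormalBasis ι ℂ H) (k : ι) :
    delta (⇑e) (e k) = e k ⊗ₜ[ℂ] e k := by
  rw [delta_apply]
  rw [Finset.sum_eq_single k]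
  · simp [e.orthonormal.1 k, inner_self_eq_norm_sq_to_K]
  · intro i _ hik
    rw [e.orthonormal.2 hik, zero_smul]
  · simp

/-- Lemma A: the span of a basis vector is copyable. -/
lemma copyable_span_basis {ι : Type*} [Fintype ι] [DecidableEq ι]
    (e : OrthonormalBasis ι ℂ H) (i : ι) : Copyable (⇑e) (ℂ ∙ e i) := by
  have hnorm : ‖e i‖ = 1 := e.orthonormal.1 i
  apply e.toBasis.ext
  intro k
  simp only [LinearMap.comp_apply, OrthonormalBasis.coe_toBasis]
  rw [projL_apply_unit hnorm, delta_basis_apply, TensorProduct.map_tmul,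
    projL_apply_unit hnorm]
  by_cases h : i = k
  · subst h
    have : ⟪e i, e i⟫_ℂ = 1 := by
      rw [inner_self_eq_norm_sq_to_K, hnorm]; norm_num
    rw [this]
    simp [delta_basis_apply]
  · rw [e.orthonormal.2 h]
    simp

/-- evaluation functional on the tensor square. -/
noncomputable def phi (u w : H) : H ⊗[ℂ] H →ₗ[ℂ] ℂ :=
  (TensorProduct.lid ℂ ℂ).toLinearMap ∘ₗ
    TensorProduct.map (innerSL ℂ u).toLinearMap (innerSL ℂ w).toLinearMap

lemma phi_tmul (u w x y : H) : phi u w (x ⊗ₜ[ℂ] y) = ⟪u, x⟫_ℂ * ⟪w, y⟫_ℂ := by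
  simp [phi, TensorProduct.map_tmul, smul_eq_mul, mul_comm]

/-- Lemma B -/
lemma span_eq_of_copyable (e : OrthonormalBasis (Fin 2) ℂ H) {v : H} (hv : ‖v‖ = 1)
    (hc : Copyable (⇑e) (ℂ ∙ v)) : ∃ i, (ℂ ∙ v) = (ℂ ∙ e i) := by
  set a := ⟪e 0, v⟫_ℂ with ha
  set b := ⟪e 1, v⟫_ℂ with hb
  have hvab : a • e 0 + b • e 1 = v := by
    have := e.sum_repr' v
    rwa [Fin.sum_univ_two] at this
  have hvv : ⟪v, v⟫_ℂ = 1 := by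
    rw [inner_self_eq_norm_sq_to_K, hv]; norm_num
  have key : delta (⇑e) v =
      TensorProduct.map (projL (ℂ ∙ v)) (projL (ℂ ∙ v)) (delta (⇑e) v) := by
    have := congrFun (congrArg DFunLike.coe hc) v
    simp only [LinearMap.comp_apply] at this
    rw [projL_apply_unit hv, hvv, one_smul] at this
    exact this
  have hrhs : TensorProduct.map (projL (ℂ ∙ v)) (projL (ℂ ∙ v)) (delta (⇑e) v)
      = a • ((starRingEnd ℂ a • v) ⊗ₜ[ℂ] (starRingEnd ℂ a • v))
        + b • ((starRingEnd ℂ b • v) ⊗ₜ[ℂ] (starRingEnd ℂ b • v)) := by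
    have hc0 : ⟪v, e 0⟫_ℂ = starRingEnd ℂ a := by rw [ha, inner_conj_symm]
    have hc1 : ⟪v, e 1⟫_ℂ = starRingEnd ℂ b := by rw [hb, inner_conj_symm]
    rw [delta_apply, Fin.sum_univ_two, map_add, map_smul, map_smul,
      TensorProduct.map_tmul, TensorProduct.map_tmul,
      projL_apply_unit hv, projL_apply_unit hv, hc0, hc1]
  have hlhs : delta (⇑e) v = a • (e 0 ⊗ₜ[ℂ] e 0) + b • (e 1 ⊗ₜ[ℂ] e 1) := by
    rw [delta_apply, Fin.sum_univ_two]
  set c : ℂ := a * starRingEnd ℂ a * starRingEnd ℂ a + b * starRingEnd ℂ b * starRingEnd ℂ b with hcdef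
  -- coefficient equations via phi
  have e00 : ⟪e 0, e 0⟫_ℂ = 1 := by
    rw [inner_self_eq_norm_sq_to_K, e.orthonormal.1 0]; norm_num
  have e11 : ⟪e 1, e 1⟫_ℂ = 1 := by
    rw [inner_self_eq_norm_sq_to_K, e.orthonormal.1 1]; norm_num
  have e01 : ⟪e 0, e 1⟫_ℂ = 0 := e.orthonormal.2 (by norm_num)
  have e10 : ⟪e 1, e 0⟫_ℂ = 0 := e.orthonormal.2 (by norm_num)
  have coeff : ∀ u w : H, phi u w (delta (⇑e) v) =
      a * (⟪u, v⟫_ℂ * ⟪w, v⟫_ℂ) * (starRingEnd ℂ a * starRingEnd ℂ a)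
        + b * (⟪u, v⟫_ℂ * ⟪w, v⟫_ℂ) * (starRingEnd ℂ b * starRingEnd ℂ b) := by
    intro u w
    rw [key, hrhs]
    rw [map_add, map_smul, map_smul]
    simp only [TensorProduct.tmul_smul, TensorProduct.smul_tmul', map_smul, phi_tmul,
      smul_eq_mul, inner_smul_right, Complex.conj_conj]
    ring
  have eq00 : a = a * (a * a) * (starRingEnd ℂ a * starRingEnd ℂ a)
      + b * (a * a) * (starRingEnd ℂ b * starRingEnd ℂ b) := by
    have h1 := coeff (e 0) (e 0)
    rw [hlhs] at h1
    simp only [map_add, map_smul, phi_tmul, smul_eq_mul, e00, e01, e10, e11] at h1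
    rw [← ha] at h1
    linear_combination h1
  have eq11 : b = a * (b * b) * (starRingEnd ℂ a * starRingEnd ℂ a)
      + b * (b * b) * (starRingEnd ℂ b * starRingEnd ℂ b) := by
    have h1 := coeff (e 1) (e 1)
    rw [hlhs] at h1
    simp only [map_add, map_smul, phi_tmul, smul_eq_mul, e00, e01, e10, e11] at h1
    rw [← hb] at h1
    linear_combination h1
  have eq01 : 0 = a * (a * b) * (starRingEnd ℂ a * starRingEnd ℂ a)
      + b * (a * b) * (starRingEnd ℂ b * starRingEnd ℂ b) := by
    have h1 := coeff (e 0) (e 1)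
    rw [hlhs] at h1
    simp only [map_add, map_smul, phi_tmul, smul_eq_mul, e00, e01, e10, e11] at h1
    rw [← ha, ← hb] at h1
    linear_combination h1
  -- now pure algebra: a*b*c = 0, a = a^2 c, b = b^2 c
  have habc : a * b * c = 0 := by rw [hcdef]; linear_combination -eq01
  have haa : a = a * a * c := by rw [hcdef]; linear_combination eq00
  have hbb : b = b * b * c := by rw [hcdef]; linear_combination eq11
  have hvne : v ≠ 0 := by intro h0; rw [h0, norm_zero] at hv; norm_num at hv
  have habzero : a = 0 ∨ b = 0 := by
    rcases mul_eq_zero.mp habc with h | hc0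
    · rcases mul_eq_zero.mp h with h | h
      · exact Or.inl h
      · exact Or.inr h
    · exfalso
      have ha0 : a = 0 := by rw [haa, hc0, mul_zero]
      have hb0 : b = 0 := by rw [hbb, hc0, mul_zero]
      apply hvne
      rw [← hvab, ha0, hb0, zero_smul, zero_smul, add_zero]
  rcases habzero with h0 | h0
  · refine ⟨1, ?_⟩
    have hvb : v = b • e 1 := by rw [← hvab, h0, zero_smul, zero_add]
    have hbne : b ≠ 0 := by
      intro hb0; apply hvne; rw [hvb, hb0, zero_smul]
    rw [hvb, Submodule.span_singleton_smul_eq (IsUnit.mk0 b hbne) (e 1)]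
  · refine ⟨0, ?_⟩
    have hvb : v = a • e 0 := by rw [← hvab, h0, zero_smul, add_zero]
    have hane : a ≠ 0 := by
      intro hb0; apply hvne; rw [hvb, hb0, zero_smul]
    rw [hvb, Submodule.span_singleton_smul_eq (IsUnit.mk0 a hane) (e 0)]

end Aux

/-- For a two-dimensional complex inner product space `H` and orthonormal bases
`e, f : Fin 2 → H`, the classical structures `δ_e` and `δ_f` are partially complementary
(every subspace copyable along both is trivial) if and only if the two bases share no
common ray. -/
theorem partially_complementary_iff_no_common_ray
    {H : Type*} [NormedAddCommGroup H] [InnerProductSpace ℂ H] [FiniteDimensional ℂ H]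
    (hdim : Module.finrank ℂ H = 2)
    (e f : OrthonormalBasis (Fin 2) ℂ H) :
    (∀ K : Submodule ℂ H, Copyable (⇑e) K → Copyable (⇑f) K → K = ⊥ ∨ K = ⊤) ↔
      ∀ i j : Fin 2, (ℂ ∙ (e i)) ≠ (ℂ ∙ (f j)) := by
  constructor
  · intro h i j hspan
    have he : e i ≠ 0 := by
      intro h0
      have := e.orthonormal.1 i
      rw [h0, norm_zero] at this; norm_num at this
    have hcf : Copyable (⇑f) (ℂ ∙ e i) := by
      rw [hspan]; exact copyable_span_basis f j
    rcases h (ℂ ∙ e i) (copyable_span_basis e i) hcf with hbot | htop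
    · exact he (Submodule.span_singleton_eq_bot.mp hbot)
    · have h1 : Module.finrank ℂ (ℂ ∙ e i : Submodule ℂ H) = 1 :=
        finrank_span_singleton he
      rw [htop, finrank_top, hdim] at h1
      norm_num at h1
  · intro h K hKe hKf
    by_contra hK
    push_neg at hK
    obtain ⟨hKbot, hKtop⟩ := hK
    -- K has finrank 1
    have hfin : Module.finrank ℂ K = 1 := by
      have hlt : Module.finrank ℂ K < 2 := by
        rw [← hdim]
        exact Submodule.finrank_lt hKtop
      have hpos : Module.finrank ℂ K ≠ 0 := by
        intro h0
        exact hKbot (Submodule.finrank_eq_zero.mp h0)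
      omega
    -- get nonzero v ∈ K
    obtain ⟨v, hvK, hvne⟩ := Submodule.exists_mem_ne_zero_of_ne_bot hKbot
    have hKv : K = ℂ ∙ v := by
      refine (Submodule.eq_of_le_of_finrank_eq ?_ ?_).symm
      · rwa [Submodule.span_singleton_le_iff_mem]
      · rw [hfin, finrank_span_singleton hvne]
    set u : H := ‖v‖⁻¹ • v with hu
    have hnu : ‖u‖ = 1 := by
      rw [hu, norm_smul, norm_inv, norm_norm]
      field_simp [norm_ne_zero_iff.mpr hvne]
    have hspanu : K = ℂ ∙ u := by
      rw [hKv, hu]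
      have : IsUnit ((‖v‖ : ℂ)⁻¹) := by
        apply IsUnit.inv
        simp [Complex.ofReal_eq_zero, norm_ne_zero_iff.mpr hvne]
      rw [show ‖v‖⁻¹ • v = ((‖v‖ : ℂ)⁻¹) • v by
        rw [← Complex.ofReal_inv, Complex.coe_smul]]
      rw [Submodule.span_singleton_smul_eq this v]
    rw [hspanu] at hKe hKf
    obtain ⟨i, hi⟩ := span_eq_of_copyable e hnu hKe
    obtain ⟨j, hj⟩ := span_eq_of_copyable f hnu hKf
    exact h i j (hi ▸ hj ▸ rfl)
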